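/- arXiv:1706.03124 — 3 statements merged into one kernel-verified Lean document; each statement's English description precedes it below -/
import Mathlib

section
/- Let (q_n) be a monotone non-decreasing sequence of integers with q_n ≥ 2 for all n, and let (ε_n) be a sequence of integers such that (ε_{n+1} − ε_n)/q_{n+1} → 0 as n → ∞. Then ∑_{n=1}^∞ ε_n/(q_1 q_2 ⋯ q_n) is rational if and only if there exist a rational constant c and a positive integer n_0 such that ε_n = c · (q_n − 1) for all n ≥ n_0. -/
open Finset Filter

namespace TY

noncomputable def P (q : ℕ → ℕ) (n : ℕ) : ℝ := ∏ i ∈ Finset.range n, (q i : ℝ)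

variable {q : ℕ → ℕ} {ε : ℕ → ℤ}

lemma P_pos (hq : ∀ n, 2 ≤ q n) (n : ℕ) : 0 < P q n := by
  apply Finset.prod_pos; intro i _
  have := hq i; positivity

lemma P_succ (n : ℕ) : P q (n + 1) = P q n * q n := Finset.prod_range_succ _ _

lemma two_pow_le_P (hq : ∀ n, 2 ≤ q n) (n : ℕ) : (2 : ℝ) ^ n ≤ P q n := by
  have : (2:ℝ) ^ n = ∏ _i ∈ Finset.range n, (2:ℝ) := by simp
  rw [this, P]
  apply Finset.prod_le_prod (by intro i _; norm_num)
  intro i _; exact_mod_cast hq i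

lemma P_mul_Ico {m n : ℕ} (hmn : m ≤ n) :
    P q m * ∏ i ∈ Finset.Ico m n, (q i : ℝ) = P q n :=
  Finset.prod_range_mul_prod_Ico _ hmn

lemma pow_card_le_prod_Ico (hq : ∀ n, 2 ≤ q n) (a b : ℕ) :
    (2:ℝ) ^ (Finset.Ico a b).card ≤ ∏ i ∈ Finset.Ico a b, (q i : ℝ) := by
  have : (2:ℝ) ^ (Finset.Ico a b).card = ∏ _i ∈ Finset.Ico a b, (2:ℝ) := by simp
  rw [this]
  exact Finset.prod_le_prod (by intro i _; norm_num) (by intro i _; exact_mod_cast hq i)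

/-- `P m / P (m+j+1) ≤ (1/q m) * (1/2)^j` -/
lemma P_div_le (hq : ∀ n, 2 ≤ q n) (m j : ℕ) :
    P q m / P q (m + j + 1) ≤ (1 / q m) * (1 / 2) ^ j := by
  have hPm := P_pos hq m
  have h1 : P q (m + j + 1) = P q m * ∏ i ∈ Finset.Ico m (m + j + 1), (q i : ℝ) :=
    (P_mul_Ico (by omega)).symm
  have h2 : (q m : ℝ) * 2 ^ j ≤ ∏ i ∈ Finset.Ico m (m + j + 1), (q i : ℝ) := by
    rw [Finset.prod_eq_prod_Ico_succ_bot (by omega) (fun i => (q i : ℝ))]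
    apply mul_le_mul_of_nonneg_left _ (by positivity)
    calc (2:ℝ) ^ j = 2 ^ (Finset.Ico (m+1) (m+j+1)).card := by rw [Nat.card_Ico]; congr 1; omega
      _ ≤ _ := pow_card_le_prod_Ico hq _ _
  have hq0 : (0:ℝ) < q m := by have := hq m; positivity
  rw [h1, div_le_iff₀ (by rw [← h1]; exact P_pos hq _)]
  have key : (1 / (q m:ℝ)) * (1/2)^j * (P q m * ((q m) * 2 ^ j)) = P q m := by
    field_simp
    rw [← mul_pow]; norm_num
  calc P q m = (1 / (q m:ℝ)) * (1/2)^j * (P q m * ((q m) * 2 ^ j)) := key.symm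
    _ ≤ _ := by
        apply mul_le_mul_of_nonneg_left _ (by positivity)
        exact mul_le_mul_of_nonneg_left h2 hPm.le

/-- `P m / P (m+j+1) ≤ (1/q m)^(j+1)` -/
lemma P_div_le' (hq : ∀ n, 2 ≤ q n) (hmono : Monotone q) (m j : ℕ) :
    P q m / P q (m + j + 1) ≤ (1 / q m) ^ (j + 1) := by
  have hPm := P_pos hq m
  have hq0 : (0:ℝ) < q m := by have := hq m; positivity
  have h1 : P q (m + j + 1) = P q m * ∏ i ∈ Finset.Ico m (m + j + 1), (q i : ℝ) :=
    (P_mul_Ico (by omega)).symm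
  have h2 : (q m : ℝ) ^ (j + 1) ≤ ∏ i ∈ Finset.Ico m (m + j + 1), (q i : ℝ) := by
    calc (q m:ℝ) ^ (j+1) = (q m:ℝ) ^ (Finset.Ico m (m+j+1)).card := by
          rw [Nat.card_Ico]; congr 1; omega
      _ = ∏ _i ∈ Finset.Ico m (m+j+1), (q m : ℝ) := by simp [Nat.card_Ico]
      _ ≤ _ := Finset.prod_le_prod (by intro i _; positivity)
          (by intro x hx; exact_mod_cast hmono (Finset.mem_Ico.1 hx).1)
  rw [h1, div_le_iff₀ (by rw [← h1]; exact P_pos hq _)]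
  have key : ((1:ℝ) / q m) ^ (j+1) * (P q m * (q m) ^ (j+1)) = P q m := by
    field_simp
    rw [← mul_pow, one_div_mul_cancel hq0.ne', one_pow]
  calc P q m = _ := key.symm
    _ ≤ _ := by
        apply mul_le_mul_of_nonneg_left _ (by positivity)
        exact mul_le_mul_of_nonneg_left h2 hPm.le

lemma P_div_pos (hq : ∀ n, 2 ≤ q n) (m n : ℕ) : 0 < P q m / P q n :=
  div_pos (P_pos hq m) (P_pos hq n)





/-- From the o(q) hypothesis: for every η>0, eventually |ε_{k+1} - ε_k| ≤ η q_{k+1}. -/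
lemma eta_bound (hq : ∀ n, 2 ≤ q n)
    (hlim : Filter.Tendsto (fun n : ℕ => ((ε (n + 1) - ε n : ℤ) : ℝ) / (q (n + 1) : ℝ))
      Filter.atTop (nhds 0)) {η : ℝ} (hη : 0 < η) :
    ∃ N : ℕ, ∀ k ≥ N, |(ε (k+1) : ℝ) - ε k| ≤ η * q (k+1) := by
  have := (Metric.tendsto_atTop.1 hlim) η hη
  obtain ⟨N, hN⟩ := this
  refine ⟨N, fun k hk => ?_⟩
  have h := hN k hk
  rw [Real.dist_eq, sub_zero] at h
  have hqpos : (0:ℝ) < q (k+1) := by have := hq (k+1); positivity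
  rw [abs_div, abs_of_pos hqpos, div_lt_iff₀ hqpos] at h
  calc |(ε (k+1) : ℝ) - ε k| = |((ε (k+1) - ε k : ℤ) : ℝ)| := by push_cast; ring_nf
    _ ≤ η * q (k+1) := by linarith



lemma diff_bound {η : ℝ} {N : ℕ}
    (hN : ∀ k ≥ N, |(ε (k+1) : ℝ) - ε k| ≤ η * q (k+1))
    {m : ℕ} (hm : N ≤ m) (j : ℕ) :
    |(ε (m + j) : ℝ) - ε m| ≤ η * ∑ i ∈ Finset.range j, (q (m + i + 1) : ℝ) := by
  induction j with
  | zero => simp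
  | succ j ih =>
    have h1 := hN (m + j) (by omega)
    have e1 : (ε (m + (j+1)) : ℝ) - ε m = ((ε (m + j + 1) : ℝ) - ε (m+j)) + ((ε (m+j) : ℝ) - ε m) := by
      have : m + (j + 1) = m + j + 1 := by omega
      rw [this]; ring
    rw [e1, Finset.sum_range_succ, mul_add]
    calc |((ε (m + j + 1) : ℝ) - ε (m+j)) + ((ε (m+j) : ℝ) - ε m)|
        ≤ |(ε (m + j + 1) : ℝ) - ε (m+j)| + |(ε (m+j) : ℝ) - ε m| := abs_add_le _ _
      _ ≤ η * q (m + j + 1) + η * ∑ i ∈ Finset.range j, (q (m + i + 1) : ℝ) := by gcongr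
      _ = η * ∑ i ∈ Finset.range j, (q (m+i+1):ℝ) + η * q (m + j + 1) := by ring

lemma global_bound (hq : ∀ n, 2 ≤ q n) (hmono : Monotone q) {N : ℕ}
    (hN : ∀ k ≥ N, |(ε (k+1) : ℝ) - ε k| ≤ 1 * q (k+1)) :
    ∃ B : ℝ, 0 ≤ B ∧ ∀ n, |(ε n : ℝ)| ≤ B + n * q n := by
  refine ⟨∑ k ∈ Finset.range (N+1), |(ε k : ℝ)|, Finset.sum_nonneg (fun k _ => abs_nonneg _), ?_⟩
  intro n
  set B := ∑ k ∈ Finset.range (N+1), |(ε k : ℝ)| with hB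
  have hnq : (0:ℝ) ≤ n * q n := by positivity
  rcases le_or_gt n N with h | h
  · have : |(ε n : ℝ)| ≤ B := Finset.single_le_sum (f := fun k => |(ε k : ℝ)|)
      (fun k _ => abs_nonneg _) (Finset.mem_range.2 (by omega))
    linarith
  · obtain ⟨j, rfl⟩ : ∃ j, n = N + j := ⟨n - N, by omega⟩
    have hd := diff_bound hN (le_refl N) j
    have hsum : ∑ i ∈ Finset.range j, (q (N + i + 1) : ℝ) ≤ j * q (N + j) := by
      calc ∑ i ∈ Finset.range j, (q (N + i + 1) : ℝ)
          ≤ ∑ _i ∈ Finset.range j, (q (N + j) : ℝ) := by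
            apply Finset.sum_le_sum; intro i hi
            exact_mod_cast hmono (by have := Finset.mem_range.1 hi; omega)
        _ = j * q (N + j) := by simp [mul_comm]
    have hεN : |(ε N : ℝ)| ≤ B := Finset.single_le_sum (f := fun k => |(ε k : ℝ)|)
      (fun k _ => abs_nonneg _) (Finset.mem_range.2 (by omega))
    have habs : |(ε (N+j) : ℝ)| ≤ |(ε N : ℝ)| + |(ε (N + j) : ℝ) - ε N| := by
      have := abs_add_le ((ε N : ℝ)) ((ε (N + j) : ℝ) - ε N)
      simpa using this
    have hj : (j : ℝ) * q (N + j) ≤ (N + j : ℕ) * q (N + j) := by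
      have : (j:ℝ) ≤ ((N + j : ℕ) : ℝ) := by push_cast; linarith [Nat.cast_nonneg (α := ℝ) N]
      apply mul_le_mul_of_nonneg_right this (by positivity)
    calc |(ε (N+j) : ℝ)| ≤ |(ε N : ℝ)| + |(ε (N + j) : ℝ) - ε N| := habs
      _ ≤ B + 1 * ∑ i ∈ Finset.range j, (q (N + i + 1) : ℝ) := by gcongr
      _ ≤ B + (N + j : ℕ) * q (N + j) := by rw [one_mul]; gcongr; linarith
lemma summable_f (hq : ∀ n, 2 ≤ q n) {B : ℝ} (hB : 0 ≤ B)
    (hglobal : ∀ n, |(ε n : ℝ)| ≤ B + n * q n) :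
    Summable (fun n => (ε n : ℝ) / P q (n+1)) := by
  refine Summable.of_norm_bounded (f := fun n => (ε n : ℝ) / P q (n+1)) (g := fun n => B * (1/2)^n + (n:ℝ) * (1/2)^n) ?_ ?_
  · apply Summable.add
    · exact (summable_geometric_of_lt_one (by norm_num) (by norm_num)).mul_left B
    · have := summable_pow_mul_geometric_of_norm_lt_one (R := ℝ) 1
        (r := 1/2) (by rw [Real.norm_eq_abs]; rw [abs_of_pos] <;> norm_num)
      simpa using this
  · intro n
    have hP := P_pos hq (n+1)
    have hPn := P_pos hq n
    rw [Real.norm_eq_abs, abs_div, abs_of_pos hP]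
    have h1 : |(ε n : ℝ)| ≤ B + n * q n := hglobal n
    have key : (B + n * q n) / P q (n+1) ≤ B * (1/2)^n + n * (1/2)^n := by
      rw [add_div]
      apply add_le_add
      · -- B / P(n+1) ≤ B (1/2)^n  since P(n+1) ≥ 2^(n+1) ≥ 2^n
        rw [div_le_iff₀ hP]
        calc B = B * 1 := (mul_one B).symm
          _ ≤ B * ((1/2)^n * 2^n) := by
              rw [← mul_pow]; norm_num
          _ ≤ B * ((1/2)^n * P q n) := by
              have := two_pow_le_P hq n
              have h2 : ((1:ℝ)/2)^n * 2^n ≤ (1/2)^n * P q n := by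
                apply mul_le_mul_of_nonneg_left this (by positivity)
              exact mul_le_mul_of_nonneg_left h2 hB
          _ ≤ B * ((1/2)^n * P q (n+1)) := by
              have : P q n ≤ P q (n+1) := by
                rw [P, P, Finset.prod_range_succ]
                nth_rewrite 1 [← mul_one (∏ i ∈ Finset.range n, (q i:ℝ))]
                apply mul_le_mul_of_nonneg_left _ hPn.le
                have := hq n; exact_mod_cast by omega
              have h2 : ((1:ℝ)/2)^n * P q n ≤ (1/2)^n * P q (n+1) := by
                apply mul_le_mul_of_nonneg_left this (by positivity)
              exact mul_le_mul_of_nonneg_left h2 hB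
          _ = B * (1/2)^n * P q (n+1) := by ring
      · -- n q n / P(n+1) = n / P n ≤ n (1/2)^n
        have hPsucc : P q (n+1) = P q n * q n := Finset.prod_range_succ _ _
        have hqn : (0:ℝ) < q n := by have := hq n; positivity
        rw [hPsucc, div_le_iff₀ (by positivity)]
        calc (n:ℝ) * q n = n * 1 * q n := by ring
          _ ≤ n * ((1/2)^n * 2^n) * q n := by rw [← mul_pow]; norm_num
          _ ≤ n * ((1/2)^n * P q n) * q n := by
              have := two_pow_le_P hq n
              gcongr
          _ = n * (1/2)^n * (P q n * q n) := by ring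
    calc |(ε n:ℝ)| / P q (n+1) ≤ (B + n * q n) / P q (n+1) := by gcongr
      _ ≤ _ := key

noncomputable def fTerm (q : ℕ → ℕ) (ε : ℕ → ℤ) (n : ℕ) : ℝ := (ε n : ℝ) / P q (n+1)

noncomputable def aa (q : ℕ → ℕ) (m j : ℕ) : ℝ := P q m / P q (m + j + 1)

noncomputable def A (q : ℕ → ℕ) (m : ℕ) : ℝ := ∑' j, aa q m j

noncomputable def T (q : ℕ → ℕ) (ε : ℕ → ℤ) (m : ℕ) : ℝ := P q m * ∑' j, fTerm q ε (m + j)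

noncomputable def R (q : ℕ → ℕ) (ε : ℕ → ℤ) (m : ℕ) : ℝ :=
  ∑' j, ((ε (m + j) : ℝ) - ε m) * aa q m j

lemma aa_pos (hq : ∀ n, 2 ≤ q n) (m j : ℕ) : 0 < aa q m j := P_div_pos hq _ _

lemma summable_aa (hq : ∀ n, 2 ≤ q n) (m : ℕ) : Summable (aa q m) := by
  refine Summable.of_norm_bounded (f := aa q m) (g := fun j => (1 / q m) * (1/2)^j) ?_ ?_
  · exact (summable_geometric_of_lt_one (by norm_num) (by norm_num)).mul_left _
  · intro j
    rw [Real.norm_eq_abs, abs_of_pos (aa_pos hq m j)]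
    exact P_div_le hq m j

lemma inv_q_le_A (hq : ∀ n, 2 ≤ q n) (m : ℕ) : 1 / (q m : ℝ) ≤ A q m := by
  have h0 : aa q m 0 = 1 / (q m : ℝ) := by
    have hP := P_pos hq m
    have : P q (m + 0 + 1) = P q m * q m := P_succ m
    rw [aa, this, div_mul_eq_div_div, div_self (P_pos hq m).ne']
  rw [← h0]
  exact Summable.le_tsum (summable_aa hq m) 0 (fun j _ => (aa_pos hq m j).le)

lemma A_pos (hq : ∀ n, 2 ≤ q n) (m : ℕ) : 0 < A q m := by
  have := inv_q_le_A hq m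
  have hqm : (0:ℝ) < q m := by have := hq m; positivity
  have : (0:ℝ) < 1 / q m := by positivity
  linarith [inv_q_le_A hq m]

lemma A_le (hq : ∀ n, 2 ≤ q n) (hmono : Monotone q) (m : ℕ) :
    A q m ≤ 1 / ((q m : ℝ) - 1) := by
  have hqm : (2:ℝ) ≤ q m := by exact_mod_cast hq m
  have hx0 : (0:ℝ) ≤ 1 / q m := by positivity
  have hx1 : (1:ℝ) / q m < 1 := by
    rw [div_lt_one (by linarith)]; linarith
  have hsum : Summable (fun j : ℕ => (1 / (q m:ℝ)) ^ (j+1)) := by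
    have : Summable (fun j : ℕ => (1 / (q m:ℝ)) * (1 / (q m:ℝ)) ^ j) :=
      (summable_geometric_of_lt_one hx0 hx1).mul_left _
    simpa [pow_succ, mul_comm] using this
  have hle : A q m ≤ ∑' j : ℕ, (1 / (q m:ℝ)) ^ (j+1) :=
    Summable.tsum_le_tsum (fun j => P_div_le' hq hmono m j) (summable_aa hq m) hsum
  have hval : ∑' j : ℕ, (1 / (q m:ℝ)) ^ (j+1) = 1 / ((q m:ℝ) - 1) := by
    have h1 : ∑' j : ℕ, (1 / (q m:ℝ)) ^ (j+1)
        = ∑' j : ℕ, (1 / (q m:ℝ)) * (1 / (q m:ℝ)) ^ j := by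
      congr 1; funext j; rw [pow_succ, mul_comm]
    rw [h1, tsum_mul_left, tsum_geometric_of_lt_one hx0 hx1]
    have hne : (q m:ℝ) - 1 ≠ 0 := by linarith
    have hne2 : (q m:ℝ) ≠ 0 := by linarith
    field_simp
  linarith

lemma summable_tail {m : ℕ} (hf : Summable (fTerm q ε)) :
    Summable (fun j => fTerm q ε (m + j)) := by
  have : (fun j => fTerm q ε (m + j)) = (fun j => fTerm q ε (j + m)) := by
    funext j; rw [Nat.add_comm]
  rw [this]
  exact (summable_nat_add_iff m).2 hf

lemma summable_eps_aa (hq : ∀ n, 2 ≤ q n) (hf : Summable (fTerm q ε)) (m : ℕ) :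
    Summable (fun j => (ε (m + j) : ℝ) * aa q m j) := by
  have key : (fun j => (ε (m + j) : ℝ) * aa q m j)
      = (fun j => P q m * fTerm q ε (m + j)) := by
    funext j
    have hP1 := P_pos hq (m + j + 1)
    rw [fTerm, aa]
    field_simp
  rw [key]
  exact (summable_tail hf).mul_left _

lemma T_eq_tsum (hq : ∀ n, 2 ≤ q n) (hf : Summable (fTerm q ε)) (m : ℕ) :
    T q ε m = ∑' j, (ε (m + j) : ℝ) * aa q m j := by
  have key : (fun j => (ε (m + j) : ℝ) * aa q m j)
      = (fun j => P q m * fTerm q ε (m + j)) := by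
    funext j
    have hP1 := P_pos hq (m + j + 1)
    rw [fTerm, aa]
    field_simp
  rw [T, key, tsum_mul_left]

lemma summable_R (hq : ∀ n, 2 ≤ q n) (hf : Summable (fTerm q ε)) (m : ℕ) :
    Summable (fun j => ((ε (m + j) : ℝ) - ε m) * aa q m j) := by
  have : (fun j => ((ε (m + j) : ℝ) - ε m) * aa q m j)
      = (fun j => (ε (m + j) : ℝ) * aa q m j - (ε m : ℝ) * aa q m j) := by
    funext j; ring
  rw [this]
  exact (summable_eps_aa hq hf m).sub ((summable_aa hq m).mul_left _)

lemma T_decomp (hq : ∀ n, 2 ≤ q n) (hf : Summable (fTerm q ε)) (m : ℕ) :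
    T q ε m = (ε m : ℝ) * A q m + R q ε m := by
  rw [T_eq_tsum hq hf m, A, R, ← tsum_mul_left (a := (ε m : ℝ)),
    ← Summable.tsum_add ((summable_aa hq m).mul_left _) (summable_R hq hf m)]
  congr 1; funext j; ring

lemma q_mul_aa_le (hq : ∀ n, 2 ≤ q n) (m k : ℕ) :
    (q (m+(k+1)) : ℝ) * aa q m (k+1) ≤ (2 / q m) * (1/2)^(k+1) := by
  have hqm : (0:ℝ) < q m := by have := hq m; positivity
  have hqmj : (0:ℝ) < q (m+(k+1)) := by have := hq (m+(k+1)); positivity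
  set Pi2 := ∏ i ∈ Finset.Ico (m+1) (m+(k+1)), (q i:ℝ) with hPi2
  have hPipos : 0 < Pi2 := by
    apply Finset.prod_pos; intro i _; have := hq i; positivity
  have hPige : (2:ℝ)^k ≤ Pi2 := by
    have h := pow_card_le_prod_Ico hq (m+1) (m+(k+1))
    rwa [Nat.card_Ico, show m+(k+1) - (m+1) = k by omega] at h
  have hsplit : P q (m+(k+1)+1) = P q m * ((q m:ℝ) * Pi2 * q (m+(k+1))) := by
    rw [← P_mul_Ico (show m ≤ m+(k+1)+1 by omega)]
    congr 1
    rw [Finset.prod_eq_prod_Ico_succ_bot (by omega) (fun i => (q i:ℝ)),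
      Finset.prod_Ico_succ_top (show m+1 ≤ m+(k+1) by omega)]
    ring
  have haa : aa q m (k+1) = 1 / ((q m:ℝ) * Pi2 * q (m+(k+1))) := by
    rw [aa, hsplit, div_mul_eq_div_div, div_self (P_pos hq m).ne']
  rw [haa]
  have h1 : (q (m+(k+1)):ℝ) * (1 / ((q m:ℝ) * Pi2 * q (m+(k+1)))) = 1/((q m:ℝ)*Pi2) := by
    field_simp
  rw [h1]
  have h2 : (2 / (q m:ℝ)) * (1/2)^(k+1) = 1/((q m:ℝ) * 2^k) := by
    rw [pow_succ]
    field_simp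
    rw [← mul_pow]; norm_num
  rw [h2]
  apply one_div_le_one_div_of_le (by positivity)
  exact mul_le_mul_of_nonneg_left hPige hqm.le

lemma R_bound (hq : ∀ n, 2 ≤ q n) (hmono : Monotone q) (hf : Summable (fTerm q ε))
    {η : ℝ} (hη : 0 ≤ η) {N : ℕ}
    (hN : ∀ k ≥ N, |(ε (k+1) : ℝ) - ε k| ≤ η * q (k+1))
    {m : ℕ} (hm : N ≤ m) :
    |R q ε m| ≤ 4 * η / q m := by
  have hqm : (0:ℝ) < q m := by have := hq m; positivity
  set g : ℕ → ℝ := fun j => (2 * η / q m) * (j * (1/2)^j) with hg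
  have hsg : Summable g := by
    apply Summable.mul_left
    have := summable_pow_mul_geometric_of_norm_lt_one (R := ℝ) 1
      (r := 1/2) (by rw [Real.norm_eq_abs, abs_of_pos] <;> norm_num)
    simpa using this
  have habs : ∀ j, |((ε (m+j):ℝ) - ε m) * aa q m j| ≤ g j := by
    intro j
    cases j with
    | zero => simp [hg]
    | succ k =>
      have hd := diff_bound hN hm (k+1)
      have hsum_le : ∑ i ∈ Finset.range (k+1), (q (m+i+1):ℝ) ≤ (k+1 : ℕ) * q (m+(k+1)) := by
        calc ∑ i ∈ Finset.range (k+1), (q (m+i+1):ℝ)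
            ≤ ∑ _i ∈ Finset.range (k+1), (q (m+(k+1)):ℝ) := by
              apply Finset.sum_le_sum; intro i hi
              exact_mod_cast hmono (by have := Finset.mem_range.1 hi; omega)
          _ = (k+1 : ℕ) * q (m+(k+1)) := by simp [mul_comm]
      have haapos := aa_pos hq m (k+1)
      rw [abs_mul, abs_of_pos haapos]
      have hqmj : (0:ℝ) ≤ q (m+(k+1)) := by positivity
      calc |(ε (m+(k+1)):ℝ) - ε m| * aa q m (k+1)
          ≤ (η * ((k+1:ℕ) * q (m+(k+1)))) * aa q m (k+1) := by
            apply mul_le_mul_of_nonneg_right _ haapos.le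
            calc |(ε (m+(k+1)):ℝ) - ε m| ≤ η * ∑ i ∈ Finset.range (k+1), (q (m+i+1):ℝ) := hd
              _ ≤ η * ((k+1:ℕ) * q (m+(k+1))) := mul_le_mul_of_nonneg_left hsum_le hη
        _ = (η * (k+1:ℕ)) * ((q (m+(k+1)):ℝ) * aa q m (k+1)) := by ring
        _ ≤ (η * (k+1:ℕ)) * ((2 / q m) * (1/2)^(k+1)) := by
            apply mul_le_mul_of_nonneg_left (q_mul_aa_le hq m k) (by positivity)
        _ = g (k+1) := by rw [hg]; push_cast; ring
  have hsabs : Summable (fun j => |((ε (m+j):ℝ) - ε m) * aa q m j|) :=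
    Summable.of_nonneg_of_le (fun j => abs_nonneg _) habs hsg
  have h1 : |R q ε m| ≤ ∑' j, |((ε (m+j):ℝ) - ε m) * aa q m j| := by
    have hs : Summable (fun j => ‖((ε (m+j):ℝ) - ε m) * aa q m j‖) := by
      simpa only [Real.norm_eq_abs] using hsabs
    have h := norm_tsum_le_tsum_norm hs
    simpa only [Real.norm_eq_abs, R] using h
  have h2 : ∑' j, |((ε (m+j):ℝ) - ε m) * aa q m j| ≤ ∑' j, g j :=
    Summable.tsum_le_tsum habs hsabs hsg
  have h3 : ∑' j, g j = 4 * η / q m := by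
    rw [hg, tsum_mul_left]
    have : ∑' (j:ℕ), (j:ℝ) * (1/2)^j = (1/2) / (1 - 1/2)^2 :=
      tsum_coe_mul_geometric_of_norm_lt_one (by rw [Real.norm_eq_abs, abs_of_pos] <;> norm_num)
    rw [this, show ((1:ℝ)/2)/(1-1/2)^2 = 2 by norm_num]
    ring
  linarith

lemma T_rec (hq : ∀ n, 2 ≤ q n) (hf : Summable (fTerm q ε)) (m : ℕ) :
    T q ε (m+1) = q m * T q ε m - ε m := by
  have htail : Summable (fun j => fTerm q ε (m + j)) := summable_tail hf
  have h0 : ∑' j, fTerm q ε (m + j) = fTerm q ε m + ∑' j, fTerm q ε (m + 1 + j) := by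
    rw [Summable.tsum_eq_zero_add htail]
    have e1 : fTerm q ε (m + 0) = fTerm q ε m := by norm_num
    have e2 : ∑' (b:ℕ), fTerm q ε (m + (b+1)) = ∑' j, fTerm q ε (m+1+j) := by
      congr 1; funext b; congr 1; omega
    rw [e1, e2]
  rw [T, T, h0]
  set X := ∑' j, fTerm q ε (m + 1 + j) with hX
  have hfm : fTerm q ε m = (ε m : ℝ) / (P q m * q m) := by rw [fTerm, P_succ]
  have hPm := P_pos hq m
  have hqm : (0:ℝ) < q m := by have := hq m; positivity
  rw [P_succ, hfm]
  field_simp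
  ring

lemma exists_int (hq : ∀ n, 2 ≤ q n) (hf : Summable (fTerm q ε)) {r : ℚ}
    (hr : ∑' n, fTerm q ε n = (r:ℝ)) (m : ℕ) :
    ∃ z : ℤ, (z:ℝ) = (r.den:ℝ) * T q ε m := by
  refine ⟨(∏ i ∈ Finset.range m, (q i:ℤ)) * r.num
    - (r.den:ℤ) * ∑ k ∈ Finset.range m, ε k * ∏ i ∈ Finset.Ico (k+1) m, (q i:ℤ), ?_⟩
  have hts := Summable.sum_add_tsum_nat_add (f := fTerm q ε) m hf
  have hcomm : ∑' j, fTerm q ε (m+j) = ∑' j, fTerm q ε (j+m) := by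
    congr 1; funext j; congr 1; omega
  have htail : ∑' j, fTerm q ε (m + j) = (r:ℝ) - ∑ k ∈ Finset.range m, fTerm q ε k := by
    rw [hcomm]; rw [hr] at hts; linarith
  have hPf : ∀ k ∈ Finset.range m,
      P q m * fTerm q ε k = (ε k:ℝ) * ∏ i ∈ Finset.Ico (k+1) m, (q i:ℝ) := by
    intro k hk
    have hkm : k + 1 ≤ m := by have := Finset.mem_range.1 hk; omega
    have hPP : P q m = P q (k+1) * ∏ i ∈ Finset.Ico (k+1) m, (q i:ℝ) := (P_mul_Ico hkm).symm
    rw [fTerm, hPP]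
    field_simp [(P_pos hq (k+1)).ne']
  have hden : ((r.den:ℝ)) * (r:ℝ) = (r.num:ℝ) := by
    rw [Rat.cast_def]
    field_simp
  have hsum : P q m * ∑ k ∈ Finset.range m, fTerm q ε k
      = ∑ k ∈ Finset.range m, (ε k:ℝ) * ∏ i ∈ Finset.Ico (k+1) m, (q i:ℝ) := by
    rw [Finset.mul_sum]; exact Finset.sum_congr rfl hPf
  have hTm : T q ε m = P q m * (r:ℝ)
      - ∑ k ∈ Finset.range m, (ε k:ℝ) * ∏ i ∈ Finset.Ico (k+1) m, (q i:ℝ) := by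
    rw [T, htail, mul_sub, hsum]
  rw [hTm]
  push_cast
  have hP : P q m = ∏ i ∈ Finset.range m, (q i:ℝ) := rfl
  rw [← hP]
  have h2 : (r.den:ℝ) * (P q m * (r:ℝ)) = P q m * (r.num:ℝ) := by
    rw [← hden]; ring
  linear_combination -h2

lemma step (hq : ∀ n, 2 ≤ q n) (hmono : Monotone q) (hf : Summable (fTerm q ε))
    {η : ℝ} (hη : 0 < η) {N : ℕ}
    (hN : ∀ k ≥ N, |(ε (k+1) : ℝ) - ε k| ≤ η * q (k+1))
    {m : ℕ} (hm : N ≤ m) :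
    (0 ≤ T q ε m → -(4*η) ≤ T q ε (m+1) ∧ T q ε (m+1) ≤ T q ε m + 4*η) ∧
    (T q ε m ≤ 0 → T q ε (m+1) ≤ 4*η ∧ T q ε m - 4*η ≤ T q ε (m+1)) := by
  have hA := A_pos hq m
  have hAle := A_le hq hmono m
  have hAge := inv_q_le_A hq m
  have hqm2 : (2:ℝ) ≤ q m := by exact_mod_cast hq m
  have hqm : (0:ℝ) < q m := by linarith
  have hR := R_bound hq hmono hf hη.le hN hm
  have hdecomp := T_decomp hq hf m
  have hrec := T_rec hq hf m
  have hε : (ε m:ℝ) = (T q ε m - R q ε m)/A q m := by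
    rw [eq_div_iff hA.ne']
    linarith [hdecomp]
  have hT1 : T q ε (m+1) = ((q m:ℝ) - 1/A q m) * T q ε m + R q ε m / A q m := by
    rw [hrec, hε]
    field_simp
    ring
  set θ := (q m:ℝ) - 1/A q m with hθ
  have hθ0 : 0 ≤ θ := by
    have h1 : 1/A q m ≤ 1/(1/(q m:ℝ)) := one_div_le_one_div_of_le (by positivity) hAge
    rw [one_div_one_div] at h1
    simp only [hθ]
    linarith
  have hθ1 : θ ≤ 1 := by
    have h1 : ((q m:ℝ) - 1) ≤ 1/A q m := by
      rw [le_div_iff₀ hA]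
      calc ((q m:ℝ) - 1) * A q m ≤ ((q m:ℝ) - 1) * (1/((q m:ℝ) - 1)) := by
            apply mul_le_mul_of_nonneg_left hAle (by linarith)
        _ = 1 := by
            apply mul_one_div_cancel
            intro hzero
            have : (q m:ℝ) = 1 := by linarith
            linarith
    simp only [hθ]
    linarith
  have hρ : |R q ε m / A q m| ≤ 4*η := by
    rw [abs_div, abs_of_pos hA, div_le_iff₀ hA]
    calc |R q ε m| ≤ 4 * η / q m := hR
      _ = (4*η) * (1/(q m:ℝ)) := by ring
      _ ≤ (4*η) * A q m := by
          apply mul_le_mul_of_nonneg_left hAge (by positivity)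
  have hρ1 : -(4*η) ≤ R q ε m / A q m := (abs_le.1 hρ).1
  have hρ2 : R q ε m / A q m ≤ 4*η := (abs_le.1 hρ).2
  set t1 := T q ε (m+1) with h_t1
  set t0 := T q ε m with h_t0
  set rr := R q ε m / A q m with h_rr
  constructor
  · intro h
    have h1 : 0 ≤ θ * t0 := mul_nonneg hθ0 h
    have h2 : θ * t0 ≤ 1 * t0 := mul_le_mul_of_nonneg_right hθ1 h
    rw [one_mul] at h2
    exact ⟨by linarith, by linarith⟩
  · intro h
    have h1 : θ * t0 ≤ 0 := mul_nonpos_of_nonneg_of_nonpos hθ0 h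
    have h2 : t0 ≤ θ * t0 := by nlinarith
    exact ⟨by linarith, by linarith⟩

lemma forward (hq : ∀ n, 2 ≤ q n) (hmono : Monotone q)
    (hlim : Filter.Tendsto (fun n : ℕ => ((ε (n + 1) - ε n : ℤ) : ℝ) / (q (n + 1) : ℝ))
      Filter.atTop (nhds 0))
    (hf : Summable (fTerm q ε)) {r : ℚ}
    (hr : ∑' n, fTerm q ε n = (r:ℝ)) :
    ∃ c : ℚ, ∃ n₀ : ℕ, ∀ n ≥ n₀, (ε n : ℚ) = c * ((q n : ℚ) - 1) := by
  set d : ℝ := (r.den : ℝ) with hd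
  have hd0 : (0:ℝ) < d := by
    rw [hd]; exact_mod_cast r.pos
  set η : ℝ := 1/(5*d) with hηdef
  have hηpos : 0 < η := by rw [hηdef]; positivity
  obtain ⟨N, hN⟩ := eta_bound hq hlim hηpos
  have hz : ∀ m, ∃ z:ℤ, (z:ℝ) = d * T q ε m := fun m => exists_int hq hf hr m
  choose z hzspec using hz
  have h4η : 4*η*d < 1 := by
    rw [hηdef]
    have : 4*(1/(5*d))*d = 4/5 := by field_simp
    rw [this]; norm_num
  have hstep : ∀ m, N ≤ m →
      (0 ≤ z m → 0 ≤ z (m+1) ∧ z (m+1) ≤ z m) ∧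
      (z m ≤ 0 → z (m+1) ≤ 0 ∧ z m ≤ z (m+1)) := by
    intro m hm
    have hs := step hq hmono hf hηpos hN hm
    have hcast : ∀ k, (z k : ℝ) = d * T q ε k := hzspec
    constructor
    · intro h0
      have hz0 : (0:ℝ) ≤ (z m : ℝ) := by exact_mod_cast h0
      rw [hcast m] at hz0
      have hT0 : 0 ≤ T q ε m := nonneg_of_mul_nonneg_right hz0 hd0
      obtain ⟨hlo, hhi⟩ := hs.1 hT0
      constructor
      · have h1 : (-1:ℝ) < (z (m+1):ℝ) := by
          rw [hcast (m+1)]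
          nlinarith [mul_le_mul_of_nonneg_left hlo hd0.le]
        have : (-1:ℤ) < z (m+1) := by exact_mod_cast h1
        omega
      · have h1 : (z (m+1):ℝ) < (z m:ℝ) + 1 := by
          rw [hcast (m+1), hcast m]
          nlinarith [mul_le_mul_of_nonneg_left hhi hd0.le]
        have : z (m+1) < z m + 1 := by exact_mod_cast h1
        omega
    · intro h0
      have hz0 : (z m : ℝ) ≤ 0 := by exact_mod_cast h0
      rw [hcast m] at hz0
      have hT0 : T q ε m ≤ 0 := nonpos_of_mul_nonpos_right hz0 hd0
      obtain ⟨hhi, hlo⟩ := hs.2 hT0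
      constructor
      · have h1 : (z (m+1):ℝ) < 1 := by
          rw [hcast (m+1)]
          nlinarith [mul_le_mul_of_nonneg_left hhi hd0.le]
        have : z (m+1) < 1 := by exact_mod_cast h1
        omega
      · have h1 : (z m:ℝ) - 1 < (z (m+1):ℝ) := by
          rw [hcast (m+1), hcast m]
          nlinarith [mul_le_mul_of_nonneg_left hlo hd0.le]
        have : z m - 1 < z (m+1) := by exact_mod_cast h1
        omega
  set v : ℕ → ℕ := fun k => (z (N + k)).natAbs with hv
  have hvstep : ∀ k, v (k+1) ≤ v k := by
    intro k
    have hs := hstep (N + k) (by omega)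
    show (z ((N + k) + 1)).natAbs ≤ (z (N + k)).natAbs
    rcases le_or_gt 0 (z (N+k)) with h|h
    · have h2 := hs.1 h; omega
    · have h2 := hs.2 h.le; omega
  have hvmono : ∀ a j, v (a + j) ≤ v a := by
    intro a j
    induction j with
    | zero => exact le_refl _
    | succ j ih => exact le_trans (hvstep (a+j)) ih
  obtain ⟨k₀, hk₀⟩ : ∃ k₀, v k₀ = sInf (Set.range v) := by
    obtain ⟨k₀, h⟩ := Nat.sInf_mem (s := Set.range v) ⟨v 0, ⟨0, rfl⟩⟩
    exact ⟨k₀, h⟩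
  have hvconst : ∀ k, k₀ ≤ k → v k = v k₀ := by
    intro k hk
    obtain ⟨j, rfl⟩ : ∃ j, k = k₀ + j := ⟨k - k₀, by omega⟩
    have h1 : v (k₀ + j) ≤ v k₀ := hvmono k₀ j
    have h2 : sInf (Set.range v) ≤ v (k₀ + j) := Nat.sInf_le ⟨k₀ + j, rfl⟩
    omega
  have hzconst : ∀ k, k₀ ≤ k → z (N + k) = z (N + k₀) := by
    intro k hk
    induction k, hk using Nat.le_induction with
    | base => rfl
    | succ k hk ih =>
      have hs := hstep (N+k) (by omega)
      have e2 : (z ((N+k)+1)).natAbs = (z (N+k)).natAbs := by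
        have e3 := hvconst (k+1) (by omega)
        have e4 := hvconst k hk
        have e5 : v (k+1) = (z ((N+k)+1)).natAbs := rfl
        have e6 : v k = (z (N+k)).natAbs := rfl
        omega
      have egoal : z (N + (k+1)) = z ((N+k)+1) := by congr 1
      rw [egoal, ← ih]
      rcases le_or_gt 0 (z (N+k)) with h|h
      · have h2 := hs.1 h; omega
      · have h2 := hs.2 h.le; omega
  have hTconst : ∀ n, N + k₀ ≤ n → T q ε n = ((z (N + k₀) : ℝ))/d := by
    intro n hn
    obtain ⟨k, rfl⟩ : ∃ k, n = N + k := ⟨n - N, by omega⟩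
    have hzn : z (N+k) = z (N + k₀) := hzconst k (by omega)
    rw [eq_div_iff hd0.ne', ← hzn]
    have := hzspec (N+k)
    linarith
  refine ⟨(z (N + k₀) : ℚ)/(r.den : ℚ), N + k₀, ?_⟩
  intro n hn
  have hT0 := hTconst n hn
  have hT1 := hTconst (n+1) (by omega)
  have hrec := T_rec hq hf n
  rw [hT0, hT1] at hrec
  have hreal : (ε n : ℝ) = ((q n:ℝ) - 1) * ((z (N + k₀):ℝ)/d) := by
    linear_combination hrec
  have hcast : ((ε n : ℚ) : ℝ) = (((z (N + k₀) : ℚ)/(r.den:ℚ) * ((q n : ℚ) - 1) : ℚ) : ℝ) := by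
    push_cast
    rw [hd] at hreal
    linear_combination hreal
  exact_mod_cast hcast

lemma backward (hq : ∀ n, 2 ≤ q n) (hf : Summable (fTerm q ε)) {c : ℚ} {n₀ : ℕ}
    (h : ∀ n ≥ n₀, (ε n : ℚ) = c * ((q n : ℚ) - 1)) :
    ∃ r : ℚ, ∑' n, fTerm q ε n = (r:ℝ) := by
  refine ⟨(∑ k ∈ Finset.range n₀, (ε k:ℚ) / ∏ i ∈ Finset.range (k+1), (q i:ℚ))
    + c / ∏ i ∈ Finset.range n₀, (q i:ℚ), ?_⟩
  have hts := (Summable.sum_add_tsum_nat_add (f := fTerm q ε) n₀ hf).symm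
  have hsumtail : Summable (fun j => fTerm q ε (j + n₀)) := (summable_nat_add_iff n₀).2 hf
  -- the tail has sum c / P q n₀
  have hterm : ∀ j : ℕ, fTerm q ε (j + n₀)
      = (c:ℝ) / P q (n₀ + j) - (c:ℝ) / P q (n₀ + (j+1)) := by
    intro j
    have hε : ((ε (j + n₀) : ℚ) : ℝ) = ((c * ((q (j + n₀) : ℚ) - 1) : ℚ) : ℝ) := by
      rw [h (j + n₀) (by omega)]
    push_cast at hε
    have hP := P_pos hq (n₀ + j)
    have hqj : (0:ℝ) < q (n₀ + j) := by have := hq (n₀ + j); positivity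
    have hPsucc : P q (n₀ + (j+1)) = P q (n₀ + j) * q (n₀ + j) := by
      rw [show n₀ + (j+1) = (n₀ + j) + 1 from rfl]
      exact P_succ _
    have hidx : j + n₀ = n₀ + j := by omega
    rw [fTerm, hidx, show n₀ + j + 1 = n₀ + (j+1) from rfl, hPsucc]
    rw [hidx] at hε
    rw [hε]
    field_simp
  have htail : ∑' j, fTerm q ε (j + n₀) = (c:ℝ) / P q n₀ := by
    have hhs : HasSum (fun j => fTerm q ε (j + n₀)) ((c:ℝ) / P q n₀) := by
      rw [hsumtail.hasSum_iff_tendsto_nat]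
      have hps : ∀ n : ℕ, ∑ j ∈ Finset.range n, fTerm q ε (j + n₀)
          = (c:ℝ) / P q n₀ - (c:ℝ) / P q (n₀ + n) := by
        intro n
        calc ∑ j ∈ Finset.range n, fTerm q ε (j + n₀)
            = ∑ j ∈ Finset.range n, ((fun i => (c:ℝ) / P q (n₀ + i)) j
                - (fun i => (c:ℝ) / P q (n₀ + i)) (j+1)) := by
              apply Finset.sum_congr rfl; intro j _; exact hterm j
          _ = (c:ℝ) / P q (n₀ + 0) - (c:ℝ) / P q (n₀ + n) :=
              Finset.sum_range_sub' (fun i => (c:ℝ) / P q (n₀ + i)) n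
          _ = (c:ℝ) / P q n₀ - (c:ℝ) / P q (n₀ + n) := by norm_num
      simp only [hps]
      have hlim0 : Filter.Tendsto (fun n : ℕ => (c:ℝ) / P q (n₀ + n)) atTop (nhds 0) := by
        apply Tendsto.div_atTop (tendsto_const_nhds)
        apply tendsto_atTop_mono (fun n => two_pow_le_P hq (n₀ + n))
        have h2 : Filter.Tendsto (fun n : ℕ => (2:ℝ) ^ n) atTop atTop :=
          tendsto_pow_atTop_atTop_of_one_lt (by norm_num)
        apply tendsto_atTop_mono (fun n => ?_) h2
        rw [pow_add]
        nth_rewrite 1 [← one_mul ((2:ℝ)^n)]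
        apply mul_le_mul_of_nonneg_right _ (by positivity)
        exact one_le_pow₀ (by norm_num)
      have := hlim0.const_sub ((c:ℝ) / P q n₀)
      simpa using this
    exact hhs.tsum_eq
  rw [hts, htail]
  push_cast
  rfl

end TY

/-- (Tijdeman–Yuan) Let `(q_n)` be a monotone non-decreasing sequence of
integers `≥ 2` and `(ε_n)` integers with `ε_{n+1} − ε_n = o(q_{n+1})`. Then
`∑ ε_n/(q_1⋯q_n)` is rational iff `ε_n/(q_n − 1)` is a (rational) constant `c` for all
`n ≥ n₀`. (Sequences are 0-indexed.) -/
theorem tijdeman_yuan_rational_iff_const_ratio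
    (q : ℕ → ℕ) (hq : ∀ n, 2 ≤ q n) (hmono : Monotone q)
    (ε : ℕ → ℤ)
    (hlim : Filter.Tendsto (fun n : ℕ => ((ε (n + 1) - ε n : ℤ) : ℝ) / (q (n + 1) : ℝ))
      Filter.atTop (nhds 0)) :
    (∃ r : ℚ, (∑' n : ℕ, (ε n : ℝ) / ∏ i ∈ Finset.range (n + 1), (q i : ℝ)) = (r : ℝ)) ↔
      ∃ c : ℚ, ∃ n₀ : ℕ, ∀ n ≥ n₀, (ε n : ℚ) = c * ((q n : ℚ) - 1) := by
  have hf : Summable (TY.fTerm q ε) := by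
    obtain ⟨N, hN⟩ := TY.eta_bound hq hlim (by norm_num : (0:ℝ) < 1)
    obtain ⟨B, hB0, hBg⟩ := TY.global_bound hq hmono hN
    exact TY.summable_f hq hB0 hBg
  have hiff : (∑' n : ℕ, (ε n : ℝ) / ∏ i ∈ Finset.range (n + 1), (q i : ℝ))
      = ∑' n, TY.fTerm q ε n := rfl
  constructor
  · rintro ⟨r, hr⟩
    exact TY.forward hq hmono hlim hf (by rw [← hiff]; exact hr)
  · rintro ⟨c, n₀, h⟩
    obtain ⟨r, hr⟩ := TY.backward hq hf h
    exact ⟨r, by rw [hiff]; exact hr⟩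
end

section
/- Let (q_k) be a sequence of integers with q_k ≥ 2 for all k, and let (ε_k) be a sequence of integers such that there is a constant C with |ε_k| ≤ C q_k for all k, and such that ε_k/q_k → α as k → ∞ for some irrational real number α. Then ∑_{k=1}^∞ ε_k/(q_1 q_2 ⋯ q_k) is irrational. -/
open Finset Filter
set_option maxHeartbeats 1000000

/-- (Oppenheim; Tijdeman–Yuan) Let `(q_k)` be integers `≥ 2` and `(ε_k)`
integers with `ε_k = O(q_k)` and `ε_k/q_k → α` for some irrational `α`. Then
`∑ ε_k/(q_1⋯q_k)` is irrational. (Sequences are 0-indexed.) -/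
theorem cantor_irrational_of_ratio_tendsto_irrational
    (q : ℕ → ℕ) (hq : ∀ k, 2 ≤ q k) (ε : ℕ → ℤ)
    (hO : ∃ C : ℝ, ∀ k, (|ε k| : ℝ) ≤ C * (q k : ℝ))
    (α : ℝ) (hα : Irrational α)
    (htend : Filter.Tendsto (fun k : ℕ => (ε k : ℝ) / (q k : ℝ)) Filter.atTop (nhds α)) :
    Irrational (∑' k : ℕ, (ε k : ℝ) / ∏ i ∈ Finset.range (k + 1), (q i : ℝ)) := by
  obtain ⟨C, hC⟩ := hO
  have hq2 : ∀ k, (2:ℝ) ≤ (q k : ℝ) := fun k => by exact_mod_cast hq k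
  have hqpos : ∀ k, (0:ℝ) < (q k : ℝ) := fun k => lt_of_lt_of_le two_pos (hq2 k)
  have hC0 : 0 ≤ C := by
    have h1 := hC 0
    have h2 := abs_nonneg ((ε 0 : ℝ))
    nlinarith [hqpos 0, abs_nonneg ((ε 0 : ℝ))]
  -- the tail sequences
  set g : ℕ → ℕ → ℝ := fun n k => (ε (n+1+k) : ℝ) / ∏ i ∈ range (k+1), (q (n+1+i) : ℝ) with hg
  have hprodpos : ∀ (m k : ℕ), (0:ℝ) < ∏ i ∈ range k, (q (m+i) : ℝ) := by
    intro m k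
    exact Finset.prod_pos fun i _ => hqpos _
  have hprodge : ∀ (m k : ℕ), (2:ℝ)^k ≤ ∏ i ∈ range k, (q (m+i) : ℝ) := by
    intro m k
    calc (2:ℝ)^k = ∏ _i ∈ range k, (2:ℝ) := by rw [Finset.prod_const, card_range]
      _ ≤ _ := Finset.prod_le_prod (fun i _ => by norm_num) (fun i _ => hq2 _)
  have hgb : ∀ n k, |g n k| ≤ C * (1/2)^k := by
    intro n k
    rw [hg]
    simp only
    rw [abs_div, abs_of_pos (hprodpos (n+1) (k+1))]
    rw [div_le_iff₀ (hprodpos (n+1) (k+1))]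
    have h1 : (2:ℝ)^k * (q (n+1+k):ℝ) ≤ ∏ i ∈ range (k+1), (q (n+1+i) : ℝ) := by
      rw [Finset.prod_range_succ]
      exact mul_le_mul_of_nonneg_right (hprodge (n+1) k) (le_of_lt (hqpos _))
    calc |(ε (n+1+k) : ℝ)| ≤ C * (q (n+1+k):ℝ) := hC _
      _ = (C * (1/2)^k) * ((2:ℝ)^k * (q (n+1+k):ℝ)) := by
          have h : ((1:ℝ)/2)^k * (2:ℝ)^k = 1 := by rw [← mul_pow]; norm_num
          calc C * (q (n+1+k):ℝ) = C * (((1:ℝ)/2)^k * (2:ℝ)^k) * (q (n+1+k):ℝ) := by rw [h, mul_one]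
            _ = (C * (1/2)^k) * ((2:ℝ)^k * (q (n+1+k):ℝ)) := by ring
      _ ≤ (C * (1/2)^k) * ∏ i ∈ range (k+1), (q (n+1+i) : ℝ) := by
          apply mul_le_mul_of_nonneg_left h1 (by positivity)
  have hgeosum : Summable (fun k : ℕ => C * (1/2:ℝ)^k) := (summable_geometric_two).mul_left C
  have hgsum : ∀ n, Summable (g n) := fun n =>
    Summable.of_norm_bounded hgeosum (fun k => by rw [Real.norm_eq_abs]; exact hgb n k)
  set T : ℕ → ℝ := fun n => ∑' k, g n k with hT
  have hTb : ∀ n, |T n| ≤ 2 * C := by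
    intro n
    have habs : Summable (fun k => |g n k|) :=
      Summable.of_nonneg_of_le (fun k => abs_nonneg _) (hgb n) hgeosum
    have hnorm : Summable (fun k => ‖g n k‖) := by simpa only [Real.norm_eq_abs] using habs
    have h2 : ‖∑' k, g n k‖ ≤ ∑' k, ‖g n k‖ := norm_tsum_le_tsum_norm hnorm
    simp only [Real.norm_eq_abs] at h2
    calc |T n| ≤ ∑' k, |g n k| := h2
      _ ≤ ∑' k, C * (1/2:ℝ)^k := Summable.tsum_le_tsum (hgb n) habs hgeosum
      _ = 2 * C := by rw [tsum_mul_left, tsum_geometric_two]; ring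
  -- recurrence
  have hrec : ∀ n, T n = (ε (n+1) : ℝ)/(q (n+1):ℝ) + T (n+1) / (q (n+1):ℝ) := by
    intro n
    have h0 : T n = g n 0 + ∑' k, g n (k+1) := Summable.tsum_eq_zero_add (hgsum n)
    have h1 : ∀ k, g n (k+1) = g (n+1) k / (q (n+1):ℝ) := by
      intro k
      rw [hg]
      simp only
      have he : n+1+(k+1) = (n+1)+1+k := by omega
      rw [he]
      rw [Finset.prod_range_succ' (fun i => (q (n+1+i):ℝ)) (k+1)]
      have h2 : ∀ i, n+1+(i+1) = (n+1)+1+i := fun i => by omega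
      rw [show (∏ i ∈ range (k+1), (q (n+1+(i+1)):ℝ)) = ∏ i ∈ range (k+1), (q ((n+1)+1+i):ℝ) from
        Finset.prod_congr rfl (fun i _ => by rw [h2 i])]
      simp only [Nat.add_zero]
      field_simp
      try ring
    have h3 : ∑' k, g n (k+1) = T (n+1) / (q (n+1):ℝ) := by
      rw [hT]; simp only
      rw [← tsum_div_const]
      exact tsum_congr h1
    rw [h0, h3, hg]
    simp
  -- q tends to infinity
  have hqinf : Tendsto (fun k => (q k : ℝ)) atTop atTop := by
    rw [tendsto_atTop_atTop]
    by_contra hcon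
    push_neg at hcon
    obtain ⟨Q, hQ⟩ := hcon
    obtain ⟨δ, hδpos, hδ⟩ : ∃ δ : ℝ, 0 < δ ∧ ∀ k ≤ ⌈Q⌉₊, ∀ m : ℤ, δ ≤ dist α ((m:ℝ)/(k:ℝ)) := by
      have := (hα.eventually_forall_le_dist_cast_div_of_denom_le ⌈Q⌉₊).filter_mono
        (nhdsWithin_le_nhds (s := Set.Ioi (0:ℝ)))
      obtain ⟨δ, hδ1, hδ2⟩ := (this.and eventually_mem_nhdsWithin).exists
      exact ⟨δ, hδ2, hδ1⟩
    have hev : ∀ᶠ k in atTop, dist ((ε k : ℝ)/(q k : ℝ)) α < δ :=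
      (htend.eventually (Metric.ball_mem_nhds α hδpos))
    rw [eventually_atTop] at hev
    obtain ⟨N, hN⟩ := hev
    obtain ⟨n, hnN, hn⟩ := hQ N
    have hqQ : q n ≤ ⌈Q⌉₊ := by
      have : (q n : ℝ) < Q := hn
      have h2 : (q n : ℝ) ≤ (⌈Q⌉₊ : ℝ) := this.le.trans (Nat.le_ceil Q)
      exact_mod_cast h2
    have := hδ (q n) hqQ (ε n)
    have h3 := hN n hnN
    rw [dist_comm] at h3
    linarith
  -- T tends to α
  have hTtend : Tendsto T atTop (nhds α) := by
    have h1 : Tendsto (fun n => T n - (ε (n+1) : ℝ)/(q (n+1):ℝ)) atTop (nhds 0) := by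
      apply squeeze_zero_norm (a := fun n => 2*C / (q (n+1):ℝ))
      · intro n
        rw [Real.norm_eq_abs, hrec n]
        simp only [add_sub_cancel_left]
        rw [abs_div, abs_of_pos (hqpos (n+1))]
        gcongr
        exact hTb (n+1)
      · exact Tendsto.div_atTop tendsto_const_nhds (hqinf.comp (tendsto_add_atTop_nat 1))
    have h2 : Tendsto (fun n => (ε (n+1) : ℝ)/(q (n+1):ℝ)) atTop (nhds α) :=
      htend.comp (tendsto_add_atTop_nat 1)
    have := h1.add h2
    simpa using this
  -- now suppose the sum is rational
  set f : ℕ → ℝ := fun k => (ε k : ℝ) / ∏ i ∈ range (k+1), (q i : ℝ) with hf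
  have hfb : ∀ k, |f k| ≤ C * (1/2)^k := by
    intro k
    rw [hf]
    simp only
    have hpp : (0:ℝ) < ∏ i ∈ range (k+1), (q i : ℝ) := Finset.prod_pos fun i _ => hqpos _
    rw [abs_div, abs_of_pos hpp, div_le_iff₀ hpp]
    have h1 : (2:ℝ)^k * (q k:ℝ) ≤ ∏ i ∈ range (k+1), (q i : ℝ) := by
      rw [Finset.prod_range_succ]
      apply mul_le_mul_of_nonneg_right _ (le_of_lt (hqpos _))
      calc (2:ℝ)^k = ∏ _i ∈ range k, (2:ℝ) := by rw [Finset.prod_const, card_range]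
        _ ≤ _ := Finset.prod_le_prod (fun i _ => by norm_num) (fun i _ => hq2 _)
    calc |(ε k : ℝ)| ≤ C * (q k:ℝ) := hC _
      _ = (C * (1/2)^k) * ((2:ℝ)^k * (q k:ℝ)) := by
          have h : ((1:ℝ)/2)^k * (2:ℝ)^k = 1 := by rw [← mul_pow]; norm_num
          calc C * (q k:ℝ) = C * (((1:ℝ)/2)^k * (2:ℝ)^k) * (q k:ℝ) := by rw [h, mul_one]
            _ = (C * (1/2)^k) * ((2:ℝ)^k * (q k:ℝ)) := by ring
      _ ≤ (C * (1/2)^k) * ∏ i ∈ range (k+1), (q i : ℝ) := by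
          apply mul_le_mul_of_nonneg_left h1 (by positivity)
  have hfsum : Summable f :=
    Summable.of_norm_bounded hgeosum (fun k => by rw [Real.norm_eq_abs]; exact hfb k)
  intro hrat
  obtain ⟨r, hr⟩ := hrat
  set S : ℝ := ∑' k, f k with hS
  -- tail formula : T n = P n * (S - partial)
  set P : ℕ → ℝ := fun n => ∏ i ∈ range (n+1), (q i : ℝ) with hP
  have hPpos : ∀ n, 0 < P n := fun n => Finset.prod_pos fun i _ => hqpos _
  have htail : ∀ n, T n = P n * (S - ∑ k ∈ range (n+1), f k) := by
    intro n
    have h1 : ∑ k ∈ range (n+1), f k + ∑' k, f (k + (n+1)) = S :=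
      Summable.sum_add_tsum_nat_add (n+1) hfsum
    have h2 : ∀ k, f (k + (n+1)) = g n k / P n := by
      intro k
      rw [hf, hg, hP]
      simp only
      have he : k + (n+1) + 1 = (n+1) + (k+1) := by omega
      rw [he, show k + (n+1) = n+1+k from by omega,
        Finset.prod_range_add (fun i => (q i:ℝ)) (n+1) (k+1)]
      have hA : (∏ i ∈ range (n+1), (q i:ℝ)) ≠ 0 := (Finset.prod_pos fun i _ => hqpos _).ne'
      have hB : (∏ i ∈ range (k+1), (q (n+1+i):ℝ)) ≠ 0 := (Finset.prod_pos fun i _ => hqpos _).ne'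
      field_simp
    have h3 : ∑' k, f (k + (n+1)) = T n / P n := by
      rw [hT, ← tsum_div_const]
      exact tsum_congr h2
    rw [h3] at h1
    have h4 : T n / P n = S - ∑ k ∈ range (n+1), f k := by linarith [h1]
    rw [← h4, mul_comm, div_mul_cancel₀ _ (hPpos n).ne']
  -- integrality
  set m : ℕ → ℤ := fun n => r.num * (∏ i ∈ range (n+1), (q i:ℤ)) -
      r.den * ∑ k ∈ range (n+1), ε k * ∏ i ∈ range (n-k), (q (k+1+i) : ℤ) with hm
  have hmval : ∀ n, (m n : ℝ) = r.den * T n := by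
    intro n
    have hden : ((r.den:ℝ)) * S = (r.num : ℝ) := by
      rw [← hr, Rat.cast_def]
      field_simp
    have hPf : ∀ k ∈ range (n+1), P n * f k = (ε k : ℝ) * ∏ i ∈ range (n-k), (q (k+1+i) : ℝ) := by
      intro k hk
      rw [Finset.mem_range] at hk
      rw [hP, hf]
      simp only
      have he : n + 1 = (k+1) + (n-k) := by omega
      rw [he, Finset.prod_range_add (fun i => (q i:ℝ)) (k+1) (n-k)]
      have hpk : (∏ i ∈ range (k+1), (q i : ℝ)) ≠ 0 :=
        (Finset.prod_pos fun i _ => hqpos _).ne'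
      field_simp
      try ring
    have hsum : P n * ∑ k ∈ range (n+1), f k
        = ∑ k ∈ range (n+1), (ε k : ℝ) * ∏ i ∈ range (n-k), (q (k+1+i) : ℝ) := by
      rw [Finset.mul_sum]
      exact Finset.sum_congr rfl hPf
    have key : (r.den:ℝ) * T n
        = (r.num:ℝ) * P n
          - (r.den:ℝ) * ∑ k ∈ range (n+1), (ε k:ℝ) * ∏ i ∈ range (n-k), (q (k+1+i):ℝ) := by
      rw [htail n, ← hsum]
      calc (r.den:ℝ) * (P n * (S - ∑ k ∈ range (n+1), f k))
          = ((r.den:ℝ) * S) * P n - (r.den:ℝ) * (P n * ∑ k ∈ range (n+1), f k) := by ring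
        _ = _ := by rw [hden]
    rw [key]
    simp only [hm, hP]
    push_cast
    ring
  -- conclude
  have hmtend : Tendsto (fun n => (m n : ℝ)) atTop (nhds ((r.den:ℝ) * α)) := by
    have := hTtend.const_mul ((r.den:ℝ))
    exact Tendsto.congr (fun n => (hmval n).symm) this
  have hmem : ((r.den:ℝ) * α) ∈ Set.range ((↑) : ℤ → ℝ) :=
    Int.isClosedEmbedding_coe_real.isClosed_range.mem_of_tendsto hmtend
      (Eventually.of_forall fun n => ⟨m n, rfl⟩)
  obtain ⟨z, hz⟩ := hmem
  have hirr : Irrational ((r.den:ℝ) * α) := by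
    have : ((r.den:ℤ):ℝ) = (r.den:ℝ) := by push_cast; ring
    rw [← this]
    exact hα.intCast_mul (by exact_mod_cast r.den_pos.ne')
  exact hirr.ne_int z hz.symm
end

section
/- Let (ε_k) be a sequence of integers and (q_k) a sequence of positive integers such that q_k ≥ 2 for all sufficiently large k and |ε_k|/(q_{k−1} q_k) → 0 as k → ∞. Then ∑_{k=1}^∞ ε_k/(q_1 q_2 ⋯ q_k) is rational if and only if there exist a positive integer B and a sequence of integers (c_k) such that for all sufficiently large k one has B ε_k = c_k q_k − c_{k+1} and |c_{k+1}| < q_k/2. -/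
set_option maxHeartbeats 1600000

open Finset Filter

private lemma qprod_pos (q : ℕ → ℕ) (hqpos : ∀ k, 0 < q k) (m : ℕ) :
    (0:ℝ) < ∏ i ∈ Finset.range m, (q i : ℝ) :=
  Finset.prod_pos fun i _ => by exact_mod_cast hqpos i

private lemma qprod_ge (q : ℕ → ℕ) {N : ℕ}
    (hN2 : ∀ i, N ≤ i → 2 ≤ q i) {a b : ℕ} (hab : a ≤ b) (ha : N ≤ a) :
    (∏ i ∈ Finset.range a, (q i : ℝ)) * 2 ^ (b - a) ≤ ∏ i ∈ Finset.range b, (q i : ℝ) := by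
  rw [← Finset.prod_range_mul_prod_Ico (fun i => (q i : ℝ)) hab]
  have h1 : (2:ℝ) ^ (b - a) ≤ ∏ i ∈ Finset.Ico a b, (q i : ℝ) := by
    calc (2:ℝ) ^ (b - a) = ∏ i ∈ Finset.Ico a b, (2:ℝ) := by
          rw [Finset.prod_const, Nat.card_Ico]
      _ ≤ ∏ i ∈ Finset.Ico a b, (q i : ℝ) := by
          apply Finset.prod_le_prod (fun i _ => by norm_num)
          intro i hi
          exact_mod_cast hN2 i (le_trans ha (Finset.mem_Ico.mp hi).1)
  have h2 : (0:ℝ) ≤ ∏ i ∈ Finset.range a, (q i : ℝ) :=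
    Finset.prod_nonneg fun i _ => by positivity
  exact mul_le_mul_of_nonneg_left h1 h2

private lemma term_bound (q : ℕ → ℕ) (hqpos : ∀ k, 0 < q k) (ε : ℕ → ℤ) (δ : ℝ) (hδ : 0 ≤ δ)
    {N : ℕ} (hN2 : ∀ i, N ≤ i → 2 ≤ q i)
    (hNδ : ∀ i, N ≤ i → (|ε (i+1)| : ℝ) ≤ δ * ((q i : ℝ) * (q (i+1) : ℝ)))
    {k : ℕ} (hk : N ≤ k) (j : ℕ) :
    (|ε (k+1+j)| : ℝ) / ∏ i ∈ Finset.range (k+2+j), (q i : ℝ) ≤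
      2 * δ * (q k : ℝ) / (∏ i ∈ Finset.range (k+1), (q i : ℝ)) * (1/2)^j := by
  have hQpos := qprod_pos q hqpos
  have hq1 : ∀ m, (1:ℝ) ≤ q m := fun m => by exact_mod_cast hqpos m
  cases j with
  | zero =>
    simp only [pow_zero, mul_one, Nat.add_zero]
    have h1 : (|ε (k+1)| : ℝ) ≤ δ * ((q k : ℝ) * (q (k+1) : ℝ)) := hNδ k hk
    have h2 : (∏ i ∈ Finset.range (k+2), (q i : ℝ)) = (∏ i ∈ Finset.range (k+1), (q i : ℝ)) * (q (k+1) : ℝ) := by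
      rw [Finset.prod_range_succ]
    have hqR : ∀ m, (0:ℝ) < (q m : ℝ) := fun m => by exact_mod_cast hqpos m
    rw [h2, div_le_div_iff₀ (mul_pos (hQpos _) (hqR _)) (hQpos _)]
    calc (|ε (k+1)| : ℝ) * (∏ i ∈ Finset.range (k+1), (q i : ℝ))
        ≤ (δ * ((q k:ℝ) * (q (k+1):ℝ))) * (∏ i ∈ Finset.range (k+1), (q i : ℝ)) := by
          exact mul_le_mul_of_nonneg_right h1 (le_of_lt (hQpos _))
      _ = 2 * δ * (q k : ℝ) * ((∏ i ∈ Finset.range (k+1), (q i : ℝ)) * (q (k+1):ℝ)) / 2 := by ring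
      _ ≤ 2 * δ * (q k : ℝ) * ((∏ i ∈ Finset.range (k+1), (q i : ℝ)) * (q (k+1):ℝ)) := by
          have h0 : (0:ℝ) ≤ 2 * δ * (q k : ℝ) * ((∏ i ∈ Finset.range (k+1), (q i : ℝ)) * (q (k+1):ℝ)) := by positivity
          linarith
  | succ j' =>
    -- k+1+(j'+1) = (k+j'+1)+1
    have hidx : k+1+(j'+1) = (k+j'+1)+1 := by ring
    have h1 : (|ε ((k+j'+1)+1)| : ℝ) ≤ δ * ((q (k+j'+1) : ℝ) * (q ((k+j'+1)+1) : ℝ)) :=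
      hNδ (k+j'+1) (by omega)
    have hsplit : (∏ i ∈ Finset.range (k+2+(j'+1)), (q i : ℝ)) =
        (∏ i ∈ Finset.range (k+j'+1), (q i : ℝ)) * ((q (k+j'+1) : ℝ) * (q (k+j'+2) : ℝ)) := by
      have : k+2+(j'+1) = (k+j'+1)+1+1 := by ring
      rw [this, Finset.prod_range_succ, Finset.prod_range_succ]
      ring_nf
    have hge : (∏ i ∈ Finset.range (k+1), (q i : ℝ)) * 2 ^ j' ≤ ∏ i ∈ Finset.range (k+j'+1), (q i : ℝ) := by
      have := qprod_ge q hN2 (show k+1 ≤ k+j'+1 by omega) (by omega)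
      simpa [show k+j'+1 - (k+1) = j' by omega] using this
    -- term ≤ δ / ∏range(k+j'+1)
    have habs : (0:ℝ) ≤ (|ε (k+1+(j'+1))| : ℝ) := by positivity
    have hqq : (0:ℝ) < (q (k+j'+1) : ℝ) * (q (k+j'+2) : ℝ) := by
      have := hqpos (k+j'+1); have := hqpos (k+j'+2); positivity
    have step1 : (|ε (k+1+(j'+1))| : ℝ) / ∏ i ∈ Finset.range (k+2+(j'+1)), (q i : ℝ)
        ≤ δ / ∏ i ∈ Finset.range (k+j'+1), (q i : ℝ) := by
      rw [hsplit, hidx]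
      rw [div_le_div_iff₀ (mul_pos (hQpos _) hqq) (hQpos _)]
      calc (|ε ((k+j'+1)+1)| : ℝ) * (∏ i ∈ Finset.range (k+j'+1), (q i : ℝ))
          ≤ (δ * ((q (k+j'+1) : ℝ) * (q ((k+j'+1)+1) : ℝ))) * (∏ i ∈ Finset.range (k+j'+1), (q i : ℝ)) :=
            mul_le_mul_of_nonneg_right h1 (le_of_lt (hQpos _))
        _ = δ * ((∏ i ∈ Finset.range (k+j'+1), (q i : ℝ)) * ((q (k+j'+1):ℝ) * ((q (k+j'+2)):ℝ))) := by
            have : (k+j'+1)+1 = k+j'+2 := by ring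
            rw [this]; ring
    have step2 : δ / ∏ i ∈ Finset.range (k+j'+1), (q i : ℝ)
        ≤ 2 * δ * (q k : ℝ) / (∏ i ∈ Finset.range (k+1), (q i : ℝ)) * (1/2)^(j'+1) := by
      rw [div_mul_eq_mul_div, div_le_div_iff₀ (hQpos _) (hQpos _)]
      have hqk : (1:ℝ) ≤ (q k : ℝ) := hq1 k
      have hhalf : (1/2:ℝ)^(j'+1) = 1 / (2 * 2^j') := by
        rw [div_pow, one_pow, pow_succ]; ring
      rw [hhalf]
      have expand : 2 * δ * (q k:ℝ) * (1 / (2 * 2^j')) * (∏ i ∈ Finset.range (k+j'+1), (q i : ℝ))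
          = δ * (q k:ℝ) * ((∏ i ∈ Finset.range (k+j'+1), (q i : ℝ)) / 2^j') := by
        field_simp
      rw [expand]
      have h3 : (∏ i ∈ Finset.range (k+1), (q i : ℝ)) ≤ (∏ i ∈ Finset.range (k+j'+1), (q i : ℝ)) / 2^j' := by
        rw [le_div_iff₀ (by positivity)]
        exact hge
      calc δ * (∏ i ∈ Finset.range (k+1), (q i : ℝ))
          ≤ δ * (q k:ℝ) * (∏ i ∈ Finset.range (k+1), (q i : ℝ)) := by nlinarith [mul_nonneg (mul_nonneg hδ (le_of_lt (hQpos (k+1)))) (sub_nonneg.mpr hqk)]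
        _ ≤ δ * (q k:ℝ) * ((∏ i ∈ Finset.range (k+j'+1), (q i : ℝ)) / 2^j') := by
            apply mul_le_mul_of_nonneg_left h3 (by positivity)
    exact le_trans step1 step2


private lemma tail_summable_abs (q : ℕ → ℕ) (hqpos : ∀ k, 0 < q k) (ε : ℕ → ℤ) (δ : ℝ) (hδ : 0 ≤ δ)
    {N : ℕ} (hN2 : ∀ i, N ≤ i → 2 ≤ q i)
    (hNδ : ∀ i, N ≤ i → (|ε (i+1)| : ℝ) ≤ δ * ((q i : ℝ) * (q (i+1) : ℝ)))
    {k : ℕ} (hk : N ≤ k) :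
    Summable (fun j => (|ε (k+1+j)| : ℝ) / ∏ i ∈ Finset.range (k+2+j), (q i : ℝ)) := by
  apply Summable.of_nonneg_of_le (fun j => by positivity)
    (term_bound q hqpos ε δ hδ hN2 hNδ hk)
  exact (summable_geometric_two).mul_left _

private lemma tail_bound (q : ℕ → ℕ) (hqpos : ∀ k, 0 < q k) (ε : ℕ → ℤ) (δ : ℝ) (hδ : 0 ≤ δ)
    {N : ℕ} (hN2 : ∀ i, N ≤ i → 2 ≤ q i)
    (hNδ : ∀ i, N ≤ i → (|ε (i+1)| : ℝ) ≤ δ * ((q i : ℝ) * (q (i+1) : ℝ)))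
    {k : ℕ} (hk : N ≤ k) :
    ∑' j, (|ε (k+1+j)| : ℝ) / ∏ i ∈ Finset.range (k+2+j), (q i : ℝ) ≤
      4 * δ * (q k : ℝ) / (∏ i ∈ Finset.range (k+1), (q i : ℝ)) := by
  have h := Summable.tsum_le_tsum (term_bound q hqpos ε δ hδ hN2 hNδ hk)
    (tail_summable_abs q hqpos ε δ hδ hN2 hNδ hk) ((summable_geometric_two).mul_left _)
  calc ∑' j, (|ε (k+1+j)| : ℝ) / ∏ i ∈ Finset.range (k+2+j), (q i : ℝ)
      ≤ ∑' j : ℕ, 2 * δ * (q k : ℝ) / (∏ i ∈ Finset.range (k+1), (q i : ℝ)) * (1/2)^j := h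
    _ = 2 * δ * (q k : ℝ) / (∏ i ∈ Finset.range (k+1), (q i : ℝ)) * 2 := by
        rw [tsum_mul_left, tsum_geometric_two]
    _ = 4 * δ * (q k : ℝ) / (∏ i ∈ Finset.range (k+1), (q i : ℝ)) := by ring

private lemma main_summable (q : ℕ → ℕ) (hqpos : ∀ k, 0 < q k)
    (hq : ∀ᶠ k : ℕ in Filter.atTop, 2 ≤ q k) (ε : ℕ → ℤ)
    (hlim : Filter.Tendsto (fun k : ℕ => (|ε (k + 1)| : ℝ) / ((q k : ℝ) * (q (k + 1) : ℝ)))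
      Filter.atTop (nhds 0)) :
    Summable (fun k => (ε k : ℝ) / ∏ i ∈ Finset.range (k + 1), (q i : ℝ)) := by
  have hev : ∀ᶠ k : ℕ in atTop, (|ε (k + 1)| : ℝ) / ((q k : ℝ) * (q (k + 1) : ℝ)) < 1 :=
    hlim.eventually (gt_mem_nhds one_pos)
  obtain ⟨N, hN⟩ := (hq.and hev).exists_forall_of_atTop
  have hN2 : ∀ i, N ≤ i → 2 ≤ q i := fun i hi => (hN i hi).1
  have hNδ : ∀ i, N ≤ i → (|ε (i+1)| : ℝ) ≤ (1:ℝ) * ((q i : ℝ) * (q (i+1) : ℝ)) := by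
    intro i hi
    have hpos : (0:ℝ) < (q i : ℝ) * (q (i+1) : ℝ) := by
      have h1 : (0:ℝ) < (q i : ℝ) := by exact_mod_cast hqpos i
      have h2 : (0:ℝ) < (q (i+1) : ℝ) := by exact_mod_cast hqpos (i+1)
      positivity
    have := (hN i hi).2
    rw [div_lt_one hpos] at this
    linarith
  rw [← summable_nat_add_iff (N+1)]
  apply Summable.of_abs
  apply Summable.of_nonneg_of_le (fun j => abs_nonneg _)
    (f := fun j => 2 * 1 * (q N : ℝ) / (∏ i ∈ Finset.range (N+1), (q i : ℝ)) * (1/2)^j)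
  · intro j
    have hb := term_bound q hqpos ε 1 zero_le_one hN2 hNδ (le_refl N) j
    rw [show j + (N+1) = N+1+j by omega, show N+1+j+1 = N+2+j by omega]
    calc |(ε (N+1+j) : ℝ) / ∏ i ∈ Finset.range (N+2+j), (q i : ℝ)|
        = (|ε (N+1+j)| : ℝ) / ∏ i ∈ Finset.range (N+2+j), (q i : ℝ) := by
          rw [abs_div, abs_of_pos (qprod_pos q hqpos _)]
      _ ≤ _ := hb
  · exact (summable_geometric_two).mul_left _

/-- (Erdős–Straus) Let `(ε_k)` be integers and `(q_k)` positive integers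
with `q_k ≥ 2` for all large `k` and `|ε_k|/(q_{k−1} q_k) → 0`. Then `∑ ε_k/(q_1⋯q_k)` is
rational iff there exist a positive integer `B` and integers `(c_k)` such that, for all
large `k`, `B ε_k = c_k q_k − c_{k+1}` and `|c_{k+1}| < q_k/2`. (Sequences are 0-indexed,
so the ratio condition reads `|ε_{k+1}|/(q_k q_{k+1}) → 0`.) -/
theorem erdos_straus_rational_iff
    (q : ℕ → ℕ) (hqpos : ∀ k, 0 < q k)
    (hq : ∀ᶠ k : ℕ in Filter.atTop, 2 ≤ q k)
    (ε : ℕ → ℤ)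
    (hlim : Filter.Tendsto (fun k : ℕ => (|ε (k + 1)| : ℝ) / ((q k : ℝ) * (q (k + 1) : ℝ)))
      Filter.atTop (nhds 0)) :
    (∃ r : ℚ, (∑' k : ℕ, (ε k : ℝ) / ∏ i ∈ Finset.range (k + 1), (q i : ℝ)) = (r : ℝ)) ↔
      ∃ B : ℕ, 0 < B ∧ ∃ c : ℕ → ℤ, ∀ᶠ k : ℕ in Filter.atTop,
        (B : ℤ) * ε k = c k * (q k : ℤ) - c (k + 1) ∧
        ((|c (k + 1)| : ℤ) : ℝ) < (q k : ℝ) / 2 := by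
  have hsum := main_summable q hqpos hq ε hlim
  have hQpos := qprod_pos q hqpos
  set f : ℕ → ℝ := fun k => (ε k : ℝ) / ∏ i ∈ Finset.range (k + 1), (q i : ℝ) with hf
  constructor
  · rintro ⟨r, hr⟩
    refine ⟨r.den, r.pos, ?_⟩
    set c : ℕ → ℤ := fun k => r.num * ∏ i ∈ Finset.range k, (q i : ℤ) -
        ∑ j ∈ Finset.range k, (r.den : ℤ) * ε j * ∏ i ∈ Finset.Ico (j+1) k, (q i : ℤ) with hcdef
    refine ⟨c, ?_⟩
    -- recurrence, valid for all k
    have hrec : ∀ k : ℕ, (r.den : ℤ) * ε k = c k * (q k : ℤ) - c (k + 1) := by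
      intro k
      simp only [hcdef]
      rw [Finset.prod_range_succ, Finset.sum_range_succ, sub_mul, Finset.sum_mul]
      have hterm : ∀ j ∈ Finset.range k,
          (r.den : ℤ) * ε j * (∏ i ∈ Finset.Ico (j+1) k, (q i : ℤ)) * (q k : ℤ)
            = (r.den : ℤ) * ε j * ∏ i ∈ Finset.Ico (j+1) (k+1), (q i : ℤ) := by
        intro j hj
        rw [Finset.mem_range] at hj
        rw [Finset.prod_Ico_succ_top (by omega : j+1 ≤ k)]
        ring
      rw [Finset.sum_congr rfl hterm]
      have : ∏ i ∈ Finset.Ico (k+1) (k+1), (q i : ℤ) = 1 := by simp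
      rw [this]
      ring
    -- identity: c k as B * Q k * tail
    have hkey : ∀ k : ℕ, (c k : ℝ) =
        (r.den : ℝ) * (∏ i ∈ Finset.range k, (q i : ℝ)) * ∑' j, f (j + k) := by
      intro k
      have hsplit := (Summable.sum_add_tsum_nat_add k hsum)
      rw [hr] at hsplit
      have htail : ∑' j, f (j + k) = (r : ℝ) - ∑ m ∈ Finset.range k, f m := by
        linarith [hsplit]
      rw [htail]
      have hBr : (r.den : ℝ) * (r : ℝ) = (r.num : ℝ) := by
        rw [Rat.cast_def]
        field_simp
      rw [mul_sub, Finset.mul_sum]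
      have hterm : ∀ m ∈ Finset.range k,
          (r.den : ℝ) * (∏ i ∈ Finset.range k, (q i : ℝ)) * f m
            = (r.den : ℝ) * (ε m : ℝ) * ∏ i ∈ Finset.Ico (m+1) k, (q i : ℝ) := by
        intro m hm
        rw [Finset.mem_range] at hm
        have hQm : (∏ i ∈ Finset.range (m+1), (q i : ℝ)) * ∏ i ∈ Finset.Ico (m+1) k, (q i : ℝ)
            = ∏ i ∈ Finset.range k, (q i : ℝ) :=
          Finset.prod_range_mul_prod_Ico (fun i => (q i : ℝ)) (by omega)
        have h0 : (∏ i ∈ Finset.range (m+1), (q i : ℝ)) ≠ 0 := ne_of_gt (hQpos (m+1))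
        rw [hf]
        simp only []
        rw [← hQm]
        field_simp
      rw [Finset.sum_congr rfl hterm]
      simp only [hcdef]
      push_cast
      linear_combination (-(∏ i ∈ Finset.range k, (q i : ℝ))) * hBr
    -- choose N for the bound
    have hBpos : (0:ℝ) < (r.den : ℝ) := by exact_mod_cast r.pos
    set δ : ℝ := 1 / (16 * (r.den : ℝ)) with hδdef
    have hδpos : 0 < δ := by positivity
    have hev : ∀ᶠ k : ℕ in atTop, (|ε (k + 1)| : ℝ) / ((q k : ℝ) * (q (k + 1) : ℝ)) < δ :=
      hlim.eventually (gt_mem_nhds hδpos)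
    obtain ⟨N, hN⟩ := (hq.and hev).exists_forall_of_atTop
    have hN2 : ∀ i, N ≤ i → 2 ≤ q i := fun i hi => (hN i hi).1
    have hNδ : ∀ i, N ≤ i → (|ε (i+1)| : ℝ) ≤ δ * ((q i : ℝ) * (q (i+1) : ℝ)) := by
      intro i hi
      have hpos : (0:ℝ) < (q i : ℝ) * (q (i+1) : ℝ) := by
        have h1 : (0:ℝ) < (q i : ℝ) := by exact_mod_cast hqpos i
        have h2 : (0:ℝ) < (q (i+1) : ℝ) := by exact_mod_cast hqpos (i+1)
        positivity
      have h := (hN i hi).2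
      rw [div_lt_iff₀ hpos] at h
      nlinarith [hδpos]
    rw [eventually_atTop]
    refine ⟨N, fun k hk => ⟨hrec k, ?_⟩⟩
    -- the bound
    have hqk : (0:ℝ) < (q k : ℝ) := by exact_mod_cast hqpos k
    have habs : |(c (k+1) : ℝ)| ≤ (r.den : ℝ) * (∏ i ∈ Finset.range (k+1), (q i : ℝ)) *
        ∑' j, (|ε (k+1+j)| : ℝ) / ∏ i ∈ Finset.range (k+2+j), (q i : ℝ) := by
      rw [hkey (k+1), abs_mul, abs_mul]
      rw [abs_of_pos hBpos, abs_of_pos (hQpos (k+1))]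
      apply mul_le_mul_of_nonneg_left _ (by positivity)
      have heq : ∀ j : ℕ, |f (j + (k+1))| =
          (|ε (k+1+j)| : ℝ) / ∏ i ∈ Finset.range (k+2+j), (q i : ℝ) := by
        intro j
        rw [hf]
        simp only []
        rw [show j + (k+1) = k+1+j by omega, show k+1+j+1 = k+2+j by omega]
        rw [abs_div, abs_of_pos (hQpos _)]
      have hsumabs : Summable fun j => |f (j + (k+1))| := by
        refine Summable.congr (tail_summable_abs q hqpos ε δ (le_of_lt hδpos) hN2 hNδ hk) ?_
        intro j; exact (heq j).symm
      have hTabs : |∑' j, f (j + (k+1))| ≤ ∑' j, |f (j + (k+1))| := by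
        have := norm_tsum_le_tsum_norm (f := fun j => f (j + (k+1)))
          (by simpa [Real.norm_eq_abs] using hsumabs)
        simpa [Real.norm_eq_abs] using this
      calc |∑' j, f (j + (k+1))| ≤ ∑' j, |f (j + (k+1))| := hTabs
        _ = ∑' j, (|ε (k+1+j)| : ℝ) / ∏ i ∈ Finset.range (k+2+j), (q i : ℝ) :=
            tsum_congr heq
    have hTB := tail_bound q hqpos ε δ (le_of_lt hδpos) hN2 hNδ hk
    have h2 : |(c (k+1) : ℝ)| ≤ (r.den : ℝ) * (∏ i ∈ Finset.range (k+1), (q i : ℝ)) *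
        (4 * δ * (q k : ℝ) / (∏ i ∈ Finset.range (k+1), (q i : ℝ))) := by
      refine le_trans habs (mul_le_mul_of_nonneg_left hTB (by positivity))
    have h3 : (r.den : ℝ) * (∏ i ∈ Finset.range (k+1), (q i : ℝ)) *
        (4 * δ * (q k : ℝ) / (∏ i ∈ Finset.range (k+1), (q i : ℝ))) = (q k : ℝ) / 4 := by
      have hd0 : (r.den : ℝ) ≠ 0 := ne_of_gt hBpos
      have hP0 : (∏ i ∈ Finset.range (k+1), (q i : ℝ)) ≠ 0 := ne_of_gt (hQpos (k+1))
      rw [hδdef]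
      field_simp
      ring
    have : ((|c (k + 1)| : ℤ) : ℝ) = |(c (k+1) : ℝ)| := by push_cast; ring
    rw [this]
    calc |(c (k+1) : ℝ)| ≤ (q k : ℝ) / 4 := by rw [← h3]; exact h2
      _ < (q k : ℝ) / 2 := by linarith
  · rintro ⟨B, hB, c, hc⟩
    obtain ⟨M, hM⟩ := (hc.and hq).exists_forall_of_atTop
    have hM2 : ∀ i, M ≤ i → 2 ≤ q i := fun i hi => (hM i hi).2
    have hBR : (0:ℝ) < (B:ℝ) := by exact_mod_cast hB
    set g : ℕ → ℝ := fun k => (c k : ℝ) / ((B : ℝ) * ∏ i ∈ Finset.range k, (q i : ℝ)) with hg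
    have htel : ∀ k, M ≤ k → f k = g k - g (k+1) := by
      intro k hk
      have hrec := (hM k hk).1.1
      have hrecR : (B : ℝ) * (ε k : ℝ) = (c k : ℝ) * (q k : ℝ) - (c (k+1) : ℝ) := by
        exact_mod_cast hrec
      have h1 : f k = ((B:ℝ) * (ε k : ℝ)) / ((B:ℝ) * ∏ i ∈ Finset.range (k+1), (q i : ℝ)) := by
        rw [hf]
        simp only []
        rw [mul_div_mul_left _ _ (ne_of_gt hBR)]
      rw [h1, hrecR, hg]
      simp only []
      have hqk0 : (q k : ℝ) ≠ 0 := by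
        have : (0:ℝ) < (q k : ℝ) := by exact_mod_cast hqpos k
        exact ne_of_gt this
      rw [Finset.prod_range_succ]
      have hQ0 : (∏ i ∈ Finset.range k, (q i : ℝ)) ≠ 0 := ne_of_gt (hQpos k)
      have hB0 : (B:ℝ) ≠ 0 := ne_of_gt hBR
      field_simp
    -- bound on g for the limit
    have hgb : ∀ n : ℕ, |g (n + (M+1))| ≤
        1 / (2 * (B:ℝ) * ∏ i ∈ Finset.range M, (q i : ℝ)) * (1/2)^n := by
      intro n
      have hbd := (hM (n+M) (by omega)).1.2
      have habs : ((|c (n+M+1)| : ℤ) : ℝ) = |(c (n+M+1) : ℝ)| := by push_cast; ring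
      rw [habs] at hbd
      have hQge : (∏ i ∈ Finset.range M, (q i : ℝ)) * 2^n ≤ ∏ i ∈ Finset.range (n+M), (q i : ℝ) := by
        have := qprod_ge q hM2 (show M ≤ n+M by omega) (le_refl M)
        simpa [show n+M-M = n by omega] using this
      have hqnm : (0:ℝ) < (q (n+M) : ℝ) := by exact_mod_cast hqpos (n+M)
      have hidx : n + (M+1) = (n+M)+1 := by omega
      rw [hg]
      simp only []
      rw [hidx, abs_div, abs_of_pos (mul_pos hBR (hQpos ((n+M)+1))), Finset.prod_range_succ]
      have hQnm := hQpos (n+M)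
      have hQM := hQpos M
      have step1 : |(c ((n+M)+1) : ℝ)| / ((B:ℝ) * ((∏ i ∈ Finset.range (n+M), (q i : ℝ)) * (q (n+M) : ℝ)))
          ≤ 1 / (2 * (B:ℝ) * ∏ i ∈ Finset.range (n+M), (q i : ℝ)) := by
        rw [div_le_div_iff₀ (by positivity) (by positivity)]
        have := le_of_lt hbd
        nlinarith [mul_pos hBR hQnm, mul_nonneg (le_of_lt hBR) (le_of_lt hQnm)]
      have hrw : 1 / (2 * (B:ℝ) * ∏ i ∈ Finset.range M, (q i:ℝ)) * (1/2)^n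
          = 1 / (2 * (B:ℝ) * (∏ i ∈ Finset.range M, (q i:ℝ)) * 2^n) := by
        rw [div_pow, one_pow, div_mul_div_comm, one_mul]
      have step2 : (1:ℝ) / (2 * (B:ℝ) * ∏ i ∈ Finset.range (n+M), (q i:ℝ))
          ≤ 1 / (2 * (B:ℝ) * (∏ i ∈ Finset.range M, (q i:ℝ)) * 2^n) := by
        apply one_div_le_one_div_of_le (by positivity)
        calc 2 * (B:ℝ) * (∏ i ∈ Finset.range M, (q i:ℝ)) * 2^n
            = 2 * (B:ℝ) * ((∏ i ∈ Finset.range M, (q i:ℝ)) * 2^n) := by ring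
          _ ≤ 2 * (B:ℝ) * (∏ i ∈ Finset.range (n+M), (q i:ℝ)) :=
            mul_le_mul_of_nonneg_left hQge (by positivity)
      rw [hrw]
      exact le_trans step1 step2
    have htend1 : Tendsto (fun n => g (n + (M+1))) atTop (nhds 0) := by
      apply squeeze_zero_norm (fun n => by simpa [Real.norm_eq_abs] using hgb n)
      have := (tendsto_pow_atTop_nhds_zero_of_lt_one (by norm_num : (0:ℝ) ≤ 1/2) (by norm_num : (1/2:ℝ) < 1)).const_mul
        (1 / (2 * (B:ℝ) * ∏ i ∈ Finset.range M, (q i : ℝ)))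
      simpa using this
    have htendg : Tendsto g atTop (nhds 0) := (tendsto_add_atTop_iff_nat (M+1)).mp htend1
    have htendM : Tendsto (fun n => g (n + M)) atTop (nhds 0) :=
      (tendsto_add_atTop_iff_nat M).mpr htendg
    have hps : ∀ n, ∑ j ∈ Finset.range n, f (j + M) = g M - g (n + M) := by
      intro n
      have hcongr : ∀ j ∈ Finset.range n, f (j + M) =
          (fun j => g (j + M)) j - (fun j => g (j + M)) (j+1) := by
        intro j _
        simp only []
        rw [htel (j+M) (by omega), show j+M+1 = (j+1)+M by omega]
      rw [Finset.sum_congr rfl hcongr, Finset.sum_range_sub' (fun j => g (j + M)) n]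
      simp
    have hS : Summable fun j => f (j + M) := (summable_nat_add_iff M).mpr hsum
    have h1 := hS.hasSum.tendsto_sum_nat
    have h2 : Tendsto (fun n => ∑ j ∈ Finset.range n, f (j + M)) atTop (nhds (g M)) := by
      have h3 := (tendsto_const_nhds (x := g M) (f := atTop (α := ℕ))).sub htendM
      rw [sub_zero] at h3
      exact Tendsto.congr (fun n => (hps n).symm) h3
    have htsum : ∑' j, f (j + M) = g M := tendsto_nhds_unique h1 h2
    have hsplit := Summable.sum_add_tsum_nat_add M hsum
    refine ⟨(∑ k ∈ Finset.range M, (ε k : ℚ) / ∏ i ∈ Finset.range (k+1), (q i : ℚ)) +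
      (c M : ℚ) / ((B : ℚ) * ∏ i ∈ Finset.range M, (q i : ℚ)), ?_⟩
    rw [← hsplit, htsum]
    rw [hf, hg]
    push_cast
    ring
end
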